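/- Let U ⊆ A^{ℤ²} be a block gluing additive shift space with h_r(U) < ĥ^{(1)}(U). If the supremum ĥ^{(1)}(U) is attained by some one-dimensional sublattice L', then there exists an expanding system Ω = {Ω(n)}_{n≥1} of finite subsets of ℤ² such that h_Ω(U) = ĥ^{(1)}(U) = h_{L'}(U). -/

import Mathlib

open Filter
open scoped Classical

/-- The `m × n` rectangular lattice `Z_{m×n}(p)` with bottom-left corner `p`. -/
def Zrect (m n : ℕ) (p : ℤ × ℤ) : Finset (ℤ × ℤ) :=
  (Finset.range m ×ˢ Finset.range n).image (fun ab => (p.1 + (ab.1 : ℤ), p.2 + (ab.2 : ℤ)))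

/-- The number of patterns of `U` seen on the finite window `L`. -/
noncomputable def patternCount {A : Type*} (U : Set ((ℤ × ℤ) → A)) (L : Finset (ℤ × ℤ)) : ℕ :=
  Set.ncard ((fun x => fun p : L => x (p : ℤ × ℤ)) '' U)

/-- An additive shift space: nonempty, closed, translation invariant. -/
def IsShiftSpace {A : Type*} [TopologicalSpace A] (U : Set ((ℤ × ℤ) → A)) : Prop :=
  U.Nonempty ∧ IsClosed U ∧ ∀ v : ℤ × ℤ, ∀ x ∈ U, (fun p => x (p + v)) ∈ U

/-- An expanding system of finite sublattices of `ℤ²`. -/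
def IsExpandingSystem (Ω : ℕ → Finset (ℤ × ℤ)) : Prop :=
  (∀ n, Ω n ⊂ Ω (n + 1)) ∧ ∀ p : ℤ × ℤ, ∃ n, p ∈ Ω n

/-- The interior of a finite lattice. -/
def latInterior (L : Finset (ℤ × ℤ)) : Finset (ℤ × ℤ) :=
  L.filter (fun p => (p.1 + 1, p.2) ∈ L ∧ (p.1, p.2 + 1) ∈ L ∧ (p.1 + 1, p.2 + 1) ∈ L)

/-- The boundary of a finite lattice. -/
def latBoundary (L : Finset (ℤ × ℤ)) : Finset (ℤ × ℤ) := L \ latInterior L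

/-- The rectangular entropy `h_r(U)`. -/
noncomputable def rectEntropy {A : Type*} (U : Set ((ℤ × ℤ) → A)) : ℝ :=
  ⨅ mn : ℕ × ℕ, (1 / (((mn.1 + 1) * (mn.2 + 1) : ℕ) : ℝ)) *
    Real.log (patternCount U (Zrect (mn.1 + 1) (mn.2 + 1) (0, 0)))

/-- The entropy `h_Ω(U)` along an expanding system `Ω`. -/
noncomputable def entropyAlong {A : Type*} (U : Set ((ℤ × ℤ) → A)) (Ω : ℕ → Finset (ℤ × ℤ)) : ℝ :=
  Filter.limsup (fun n => (1 / ((Ω n).card : ℝ)) * Real.log (patternCount U (Ω n))) Filter.atTop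

/-- `Ω_{k,l}(n)`: the union of grid rectangles `Z_{k×l}((ak,bl))` contained in `L`. -/
noncomputable def gridPart (k l : ℕ) (L : Finset (ℤ × ℤ)) : Finset (ℤ × ℤ) :=
  L.filter (fun p => ∃ a b : ℤ,
    p ∈ Zrect k l ((k : ℤ) * a, (l : ℤ) * b) ∧ Zrect k l ((k : ℤ) * a, (l : ℤ) * b) ⊆ L)

/-- `β_{k,l}` : the size of the complement of the grid part. -/
noncomputable def betaKL (k l : ℕ) (L : Finset (ℤ × ℤ)) : ℕ := (L \ gridPart k l L).card

/-- `α_{k,l}` : the number of grid rectangles contained in `L`. -/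
noncomputable def alphaKL (k l : ℕ) (L : Finset (ℤ × ℤ)) : ℕ :=
  Set.ncard {ab : ℤ × ℤ | Zrect k l ((k : ℤ) * ab.1, (l : ℤ) * ab.2) ⊆ L}

/-- A tessellation of `ℤ²`. -/
def IsTessellation (T : Finset (ℤ × ℤ)) : Prop :=
  ∃ v : ℕ → ℤ × ℤ,
    (∀ i j : ℕ, i ≠ j → Disjoint (T.image (· + v i)) (T.image (· + v j))) ∧
    ∀ p : ℤ × ℤ, ∃ i : ℕ, p ∈ T.image (· + v i)

/-- Euclidean distance between points of `ℤ²`. -/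
noncomputable def euclDist (p q : ℤ × ℤ) : ℝ :=
  Real.sqrt (((p.1 - q.1 : ℤ) : ℝ) ^ 2 + ((p.2 - q.2 : ℤ) : ℝ) ^ 2)

/-- Block gluing with gap `M`. -/
def BlockGluingWithGap {A : Type*} (U : Set ((ℤ × ℤ) → A)) (M : ℕ) : Prop :=
  ∀ (m₁ n₁ m₂ n₂ : ℕ) (c₁ c₂ : ℤ × ℤ),
    (∀ p ∈ Zrect m₁ n₁ c₁, ∀ q ∈ Zrect m₂ n₂ c₂, (M : ℝ) ≤ euclDist p q) →
    ∀ x₁ ∈ U, ∀ x₂ ∈ U, ∃ x ∈ U,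
      (∀ p ∈ Zrect m₁ n₁ c₁, x p = x₁ p) ∧ ∀ q ∈ Zrect m₂ n₂ c₂, x q = x₂ q

/-- Block gluing. -/
def IsBlockGluing {A : Type*} (U : Set ((ℤ × ℤ) → A)) : Prop :=
  ∃ M : ℕ, 1 ≤ M ∧ BlockGluingWithGap U M

/-- A full shift on a sub-alphabet. -/
def IsFullShift {A : Type*} (U : Set ((ℤ × ℤ) → A)) : Prop :=
  ∃ B : Set A, U = {x | ∀ p : ℤ × ℤ, x p ∈ B}

/-- Shift of finite type. -/
def IsSFT {A : Type*} (U : Set ((ℤ × ℤ) → A)) : Prop :=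
  ∃ (F : Finset (ℤ × ℤ)) (P : Set (F → A)),
    U = {x | ∀ v : ℤ × ℤ, (fun p : F => x (v + (p : ℤ × ℤ))) ∈ P}

/-- `(i,j)` has horizontal length `m` in `L`. -/
def HasHorizLength (L : Finset (ℤ × ℤ)) (p : ℤ × ℤ) (m : ℕ) : Prop :=
  1 ≤ m ∧ (∃ c : ℤ × ℤ, p ∈ Zrect m 1 c ∧ Zrect m 1 c ⊆ L) ∧
    ∀ m' : ℕ, m < m' → ¬ ∃ c : ℤ × ℤ, p ∈ Zrect m' 1 c ∧ Zrect m' 1 c ⊆ L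

/-- `(i,j)` has vertical length `m` in `L`. -/
def HasVertLength (L : Finset (ℤ × ℤ)) (p : ℤ × ℤ) (m : ℕ) : Prop :=
  1 ≤ m ∧ (∃ c : ℤ × ℤ, p ∈ Zrect 1 m c ∧ Zrect 1 m c ⊆ L) ∧
    ∀ m' : ℕ, m < m' → ¬ ∃ c : ℤ × ℤ, p ∈ Zrect 1 m' c ∧ Zrect 1 m' c ⊆ L

noncomputable def betaHoriz (m : ℕ) (L : Finset (ℤ × ℤ)) : ℕ :=
  (L.filter (fun p => HasHorizLength L p m)).card

noncomputable def betaVert (m : ℕ) (L : Finset (ℤ × ℤ)) : ℕ :=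
  (L.filter (fun p => HasVertLength L p m)).card

/-- The one-dimensional sublattice segment `{s • v : 0 ≤ s ≤ n-1}`. -/
def lineSegment (v : ℤ × ℤ) (n : ℕ) : Finset (ℤ × ℤ) :=
  (Finset.range n).image (fun s : ℕ => ((s : ℤ) * v.1, (s : ℤ) * v.2))

/-- The projectional entropy along the one-dimensional sublattice generated by `v`. -/
noncomputable def projEntropy {A : Type*} (U : Set ((ℤ × ℤ) → A)) (v : ℤ × ℤ) : ℝ :=
  ⨅ n : ℕ, (1 / (n + 1 : ℝ)) * Real.log (patternCount U (lineSegment v (n + 1)))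

/-- `ĥ⁽¹⁾(U)`: supremum of projectional entropies over one-dimensional sublattices. -/
noncomputable def hHatOne {A : Type*} (U : Set ((ℤ × ℤ) → A)) : ℝ :=
  ⨆ v : {w : ℤ × ℤ // w ≠ 0}, projEntropy U (v : ℤ × ℤ)

/-- The horizontal golden-mean shift. -/
def goldenMeanShift : Set ((ℤ × ℤ) → Fin 2) :=
  {x | ∀ p : ℤ × ℤ, x p * x (p.1 + 1, p.2) = 0}

/-- The sequence `a_k`: `a_1 = 2`, `a_2 = 3`, `a_k = a_{k-1} + a_{k-2}`. -/
def aSeq : ℕ → ℕ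
  | 0 => 1
  | 1 => 2
  | (k + 2) => aSeq (k + 1) + aSeq k


open Topology
set_option linter.unusedSectionVars false


section PC
variable {A : Type*} [Fintype A] {U : Set ((ℤ × ℤ) → A)}

lemma patternCount_pos (hne : U.Nonempty) (L : Finset (ℤ × ℤ)) : 1 ≤ patternCount U L := by
  obtain ⟨x, hx⟩ := hne
  have h : ((fun x => fun p : L => x (p : ℤ × ℤ)) '' U).Nonempty :=
    ⟨_, Set.mem_image_of_mem _ hx⟩
  have := Set.ncard_pos (s := (fun x => fun p : L => x (p : ℤ × ℤ)) '' U) (Set.toFinite _)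
  exact this.mpr h

lemma patternCount_mono {L L' : Finset (ℤ × ℤ)} (h : L ⊆ L') :
    patternCount U L ≤ patternCount U L' := by
  classical
  have him : (fun x : (ℤ × ℤ) → A => fun p : L => x (p : ℤ × ℤ)) '' U =
      (fun g : L' → A => fun p : L => g ⟨(p : ℤ × ℤ), h p.2⟩) ''
        ((fun x : (ℤ × ℤ) → A => fun p : L' => x (p : ℤ × ℤ)) '' U) := by
    rw [← Set.image_comp]; rfl
  rw [patternCount, him]
  exact Set.ncard_image_le (Set.toFinite _)

lemma patternCount_le_pow (L : Finset (ℤ × ℤ)) :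
    patternCount U L ≤ (Fintype.card A) ^ L.card := by
  classical
  have h1 : patternCount U L ≤ (Set.univ : Set (L → A)).ncard :=
    Set.ncard_le_ncard (Set.subset_univ _) (Set.toFinite _)
  rw [Set.ncard_univ, Nat.card_fun] at h1
  simpa [Nat.card_eq_fintype_card, Fintype.card_coe] using h1

lemma patternCount_union_le (L L' : Finset (ℤ × ℤ)) :
    patternCount U (L ∪ L') ≤ patternCount U L * patternCount U L' := by
  classical
  set φ : ((L ∪ L' : Finset (ℤ × ℤ)) → A) → (L → A) × (L' → A) :=
    fun g => (fun p => g ⟨(p : ℤ × ℤ), Finset.mem_union_left _ p.2⟩,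
              fun p => g ⟨(p : ℤ × ℤ), Finset.mem_union_right _ p.2⟩) with hφ
  have hinj : Function.Injective φ := by
    intro g g' hgg'
    funext q
    rcases Finset.mem_union.1 q.2 with h | h
    · exact congrFun (congrArg Prod.fst hgg') ⟨(q : ℤ × ℤ), h⟩
    · exact congrFun (congrArg Prod.snd hgg') ⟨(q : ℤ × ℤ), h⟩
  have hsub : φ '' ((fun x : (ℤ × ℤ) → A => fun p : (L ∪ L' : Finset (ℤ × ℤ)) => x (p : ℤ × ℤ)) '' U) ⊆
      ((fun x : (ℤ × ℤ) → A => fun p : L => x (p : ℤ × ℤ)) '' U) ×ˢ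
      ((fun x : (ℤ × ℤ) → A => fun p : L' => x (p : ℤ × ℤ)) '' U) := by
    rintro _ ⟨_, ⟨x, hx, rfl⟩, rfl⟩
    exact ⟨⟨x, hx, rfl⟩, ⟨x, hx, rfl⟩⟩
  have h1 : patternCount U (L ∪ L') =
      (φ '' ((fun x : (ℤ × ℤ) → A => fun p : (L ∪ L' : Finset (ℤ × ℤ)) => x (p : ℤ × ℤ)) '' U)).ncard := by
    rw [patternCount, Set.ncard_image_of_injective _ hinj]
  rw [h1]
  calc _ ≤ (((fun x : (ℤ × ℤ) → A => fun p : L => x (p : ℤ × ℤ)) '' U) ×ˢ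
      ((fun x : (ℤ × ℤ) → A => fun p : L' => x (p : ℤ × ℤ)) '' U)).ncard :=
        Set.ncard_le_ncard hsub (Set.toFinite _)
    _ = patternCount U L * patternCount U L' := by
        rw [patternCount, patternCount, ← Nat.card_coe_set_eq,
          ← Nat.card_coe_set_eq, ← Nat.card_coe_set_eq,
          Nat.card_congr (Equiv.Set.prod _ _), Nat.card_prod]

lemma patternCount_translate (hshift : ∀ w : ℤ × ℤ, ∀ x ∈ U, (fun p => x (p + w)) ∈ U)
    (L : Finset (ℤ × ℤ)) (w : ℤ × ℤ) :
    patternCount U (L.image (· + w)) = patternCount U L := by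
  classical
  set L' : Finset (ℤ × ℤ) := L.image (· + w) with hL'
  set ψ : (L' → A) → (L → A) :=
    fun f => fun p => f ⟨(p : ℤ × ℤ) + w, Finset.mem_image_of_mem _ p.2⟩ with hψ
  have hinj : Function.Injective ψ := by
    intro f g hfg
    funext q
    obtain ⟨p, hp, hpq⟩ := Finset.mem_image.1 q.2
    have : q = ⟨p + w, Finset.mem_image_of_mem _ hp⟩ := Subtype.ext hpq.symm
    rw [this]
    exact congrFun hfg ⟨p, hp⟩
  have him : (fun x : (ℤ × ℤ) → A => fun p : L => x (p : ℤ × ℤ)) '' U =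
      ψ '' ((fun x : (ℤ × ℤ) → A => fun p : L' => x (p : ℤ × ℤ)) '' U) := by
    ext f
    constructor
    · rintro ⟨x, hx, rfl⟩
      refine ⟨fun p : L' => (fun q => x (q + -w)) (p : ℤ × ℤ),
        ⟨_, hshift (-w) x hx, rfl⟩, ?_⟩
      funext p
      show x ((p : ℤ × ℤ) + w + -w) = x (p : ℤ × ℤ)
      rw [add_neg_cancel_right]
    · rintro ⟨_, ⟨x, hx, rfl⟩, rfl⟩
      exact ⟨fun q => x (q + w), hshift w x hx, rfl⟩
  rw [patternCount, patternCount, him, Set.ncard_image_of_injective _ hinj]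

lemma lineSegment_add (v : ℤ × ℤ) (a b : ℕ) :
    lineSegment v (a + b) =
      lineSegment v a ∪ (lineSegment v b).image (· + ((a : ℤ) * v.1, (a : ℤ) * v.2)) := by
  ext q
  simp only [lineSegment, Finset.mem_union, Finset.mem_image, Finset.mem_range]
  constructor
  · rintro ⟨s, hs, rfl⟩
    rcases lt_or_ge s a with h | h
    · exact Or.inl ⟨s, h, rfl⟩
    · refine Or.inr ⟨_, ⟨s - a, by omega, rfl⟩, ?_⟩
      have : ((s - a : ℕ) : ℤ) = (s : ℤ) - a := by omega
      rw [Prod.mk_add_mk]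
      rw [this]
      simp only [Prod.mk.injEq]
      constructor <;> ring
  · rintro (⟨s, hs, rfl⟩ | ⟨_, ⟨t, ht, rfl⟩, rfl⟩)
    · exact ⟨s, by omega, rfl⟩
    · refine ⟨t + a, by omega, ?_⟩
      rw [Prod.mk_add_mk]
      push_cast
      simp only [Prod.mk.injEq]
      constructor <;> ring

lemma patternCount_lineSegment_add (hshift : ∀ w : ℤ × ℤ, ∀ x ∈ U, (fun p => x (p + w)) ∈ U)
    (v : ℤ × ℤ) (a b : ℕ) :
    patternCount U (lineSegment v (a + b)) ≤
      patternCount U (lineSegment v a) * patternCount U (lineSegment v b) := by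
  rw [lineSegment_add]
  calc patternCount U _ ≤ patternCount U (lineSegment v a) *
      patternCount U ((lineSegment v b).image (· + ((a : ℤ) * v.1, (a : ℤ) * v.2))) :=
        patternCount_union_le _ _
    _ = _ := by rw [patternCount_translate hshift]

lemma patternCount_lineSegment_pow (hshift : ∀ w : ℤ × ℤ, ∀ x ∈ U, (fun p => x (p + w)) ∈ U)
    (v : ℤ × ℤ) (m : ℕ) : ∀ k : ℕ, 1 ≤ k →
    patternCount U (lineSegment v (k * m)) ≤ (patternCount U (lineSegment v m)) ^ k := by
  intro k hk
  induction k with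
  | zero => omega
  | succ n ih =>
    rcases Nat.eq_or_lt_of_le hk with h | h
    · simp [← h]
    · have hn : 1 ≤ n := by omega
      calc patternCount U (lineSegment v ((n + 1) * m))
          = patternCount U (lineSegment v (n * m + m)) := by ring_nf
        _ ≤ patternCount U (lineSegment v (n * m)) * patternCount U (lineSegment v m) :=
            patternCount_lineSegment_add hshift v _ _
        _ ≤ (patternCount U (lineSegment v m)) ^ n * patternCount U (lineSegment v m) :=
            Nat.mul_le_mul_right _ (ih hn)
        _ = (patternCount U (lineSegment v m)) ^ (n + 1) := by ring

end PC


lemma mem_Zrect (m n : ℕ) (p q : ℤ × ℤ) :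
    q ∈ Zrect m n p ↔ p.1 ≤ q.1 ∧ q.1 < p.1 + m ∧ p.2 ≤ q.2 ∧ q.2 < p.2 + n := by
  obtain ⟨q1, q2⟩ := q
  simp only [Zrect, Finset.mem_image, Finset.mem_product, Finset.mem_range]
  constructor
  · rintro ⟨⟨a, b⟩, ⟨ha, hb⟩, heq⟩
    simp only [Prod.mk.injEq] at heq
    simp only at ha hb ⊢
    omega
  · rintro ⟨h1, h2, h3, h4⟩
    refine ⟨((q1 - p.1).toNat, (q2 - p.2).toNat), ⟨by simp; omega, by simp; omega⟩, ?_⟩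
    simp only [Prod.mk.injEq]
    omega

lemma card_Zrect (m n : ℕ) (p : ℤ × ℤ) : (Zrect m n p).card = m * n := by
  rw [Zrect, Finset.card_image_of_injOn, Finset.card_product, Finset.card_range,
    Finset.card_range]
  intro a _ b _ hab
  simp only [Prod.mk.injEq] at hab
  have h1 : (a.1 : ℤ) = b.1 := by omega
  have h2 : (a.2 : ℤ) = b.2 := by omega
  exact Prod.ext (by exact_mod_cast h1) (by exact_mod_cast h2)

lemma lineSegment_injective {v : ℤ × ℤ} (hv : v ≠ 0) :
    Function.Injective (fun s : ℕ => ((s : ℤ) * v.1, (s : ℤ) * v.2)) := by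
  intro s t hst
  simp only [Prod.mk.injEq] at hst
  have hv' : v.1 ≠ 0 ∨ v.2 ≠ 0 := by
    by_contra h
    push_neg at h
    exact hv (Prod.ext h.1 h.2)
  rcases hv' with h | h
  · have := mul_right_cancel₀ h hst.1
    exact_mod_cast this
  · have := mul_right_cancel₀ h hst.2
    exact_mod_cast this

lemma card_lineSegment {v : ℤ × ℤ} (hv : v ≠ 0) (n : ℕ) : (lineSegment v n).card = n := by
  rw [lineSegment, Finset.card_image_of_injective _ (lineSegment_injective hv),
    Finset.card_range]

lemma mem_lineSegment (v : ℤ × ℤ) (n : ℕ) (q : ℤ × ℤ) :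
    q ∈ lineSegment v n ↔ ∃ s : ℕ, s < n ∧ q = ((s : ℤ) * v.1, (s : ℤ) * v.2) := by
  simp only [lineSegment, Finset.mem_image, Finset.mem_range]
  exact ⟨fun ⟨s, h1, h2⟩ => ⟨s, h1, h2.symm⟩, fun ⟨s, h1, h2⟩ => ⟨s, h1, h2.symm⟩⟩

/-- The square `[-n, n]²`. -/
def sqN (n : ℕ) : Finset (ℤ × ℤ) := Zrect (2 * n + 1) (2 * n + 1) (-(n : ℤ), -(n : ℤ))

/-- The expanding system. -/
noncomputable def OmegaSys (v : ℤ × ℤ) (n : ℕ) : Finset (ℤ × ℤ) :=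
  lineSegment v ((n + 1).factorial) ∪ sqN n

lemma mem_sqN (n : ℕ) (q : ℤ × ℤ) :
    q ∈ sqN n ↔ -(n : ℤ) ≤ q.1 ∧ q.1 ≤ n ∧ -(n : ℤ) ≤ q.2 ∧ q.2 ≤ n := by
  rw [sqN, mem_Zrect]
  push_cast
  omega

lemma OmegaSys_expanding {v : ℤ × ℤ} (hv : v ≠ 0) :
    (∀ n, OmegaSys v n ⊂ OmegaSys v (n + 1)) ∧ ∀ p : ℤ × ℤ, ∃ n, p ∈ OmegaSys v n := by
  constructor
  · intro n
    rw [Finset.ssubset_iff_of_subset]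
    · -- find a new point
      refine ⟨(((n + 1).factorial : ℤ) * v.1, ((n + 1).factorial : ℤ) * v.2), ?_, ?_⟩
      · apply Finset.mem_union_left
        rw [mem_lineSegment]
        exact ⟨(n + 1).factorial, (Nat.factorial_lt (by omega)).mpr (by omega), rfl⟩
      · intro hmem
        have hf : (n : ℤ) + 1 ≤ ((n + 1).factorial : ℤ) := by
          exact_mod_cast Nat.self_le_factorial (n + 1)
        rcases Finset.mem_union.1 hmem with h | h
        · rw [mem_lineSegment] at h
          obtain ⟨s, hs, heq⟩ := h
          have hst := lineSegment_injective hv heq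
          omega
        · rw [mem_sqN] at h
          have hv' : v.1 ≠ 0 ∨ v.2 ≠ 0 := by
            by_contra hc
            push_neg at hc
            exact hv (Prod.ext hc.1 hc.2)
          have key : ∀ a : ℤ, 1 ≤ |a| →
              ¬ (-(n : ℤ) ≤ ((n + 1).factorial : ℤ) * a ∧ ((n + 1).factorial : ℤ) * a ≤ n) := by
            intro a ha hc
            have hf0 : (0 : ℤ) ≤ ((n + 1).factorial : ℤ) := by positivity
            have hle : ((n + 1).factorial : ℤ) ≤ |((n + 1).factorial : ℤ) * a| := by
              rw [abs_mul, abs_of_nonneg hf0]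
              nlinarith
            have habs : |((n + 1).factorial : ℤ) * a| ≤ n := abs_le.mpr ⟨hc.1, hc.2⟩
            omega
          simp only at h
          rcases hv' with h' | h'
          · exact key v.1 (by have := abs_pos.mpr h'; omega) ⟨h.1, h.2.1⟩
          · exact key v.2 (by have := abs_pos.mpr h'; omega) ⟨h.2.2.1, h.2.2.2⟩
    · -- subset
      apply Finset.union_subset_union
      · intro q hq
        rw [mem_lineSegment] at hq ⊢
        obtain ⟨s, hs, h⟩ := hq
        exact ⟨s, lt_of_lt_of_le hs (Nat.factorial_le (by omega)), h⟩
      · intro q hq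
        rw [mem_sqN] at hq ⊢
        push_cast at hq ⊢
        omega
  · intro p
    refine ⟨p.1.natAbs + p.2.natAbs, ?_⟩
    apply Finset.mem_union_right
    rw [mem_sqN]
    omega


section Analysis
variable {A : Type*} [Fintype A] {U : Set ((ℤ × ℤ) → A)}

lemma sq_bound : ∀ n : ℕ, (2 * n + 1) * (2 * n + 1) ≤ 8 * 2 ^ n := by
  intro n
  induction n with
  | zero => norm_num
  | succ kk ih =>
    rcases Nat.lt_or_ge kk 2 with hkk | hkk
    · interval_cases kk <;> norm_num
    · have h2 : (2 * (kk + 1) + 1) * (2 * (kk + 1) + 1) ≤ 2 * ((2 * kk + 1) * (2 * kk + 1)) := by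
        nlinarith
      calc (2 * (kk + 1) + 1) * (2 * (kk + 1) + 1) ≤ 2 * ((2 * kk + 1) * (2 * kk + 1)) := h2
        _ ≤ 2 * (8 * 2 ^ kk) := by omega
        _ = 8 * 2 ^ (kk + 1) := by ring

lemma ratio_tendsto_zero :
    Tendsto (fun n : ℕ => ((((2 * n + 1) * (2 * n + 1) : ℕ) : ℝ) / (((n + 1).factorial : ℕ) : ℝ)))
      atTop (𝓝 0) := by
  have h1 : Tendsto (fun n : ℕ => (8 : ℝ) * ((2 : ℝ) ^ (n + 1) / (((n + 1).factorial : ℕ) : ℝ)))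
      atTop (𝓝 (8 * 0)) :=
    ((FloorSemiring.tendsto_pow_div_factorial_atTop (2 : ℝ)).comp
      (tendsto_add_atTop_nat 1)).const_mul 8
  rw [mul_zero] at h1
  apply tendsto_of_tendsto_of_tendsto_of_le_of_le tendsto_const_nhds h1
  · intro n
    positivity
  · intro n
    have hFc : (0 : ℝ) < (((n + 1).factorial : ℕ) : ℝ) := by
      exact_mod_cast Nat.factorial_pos (n + 1)
    simp only [← mul_div_assoc]
    rw [div_le_div_iff₀ hFc hFc]
    have hb : (((2 * n + 1) * (2 * n + 1) : ℕ) : ℝ) ≤ 8 * 2 ^ (n + 1) := by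
      calc (((2 * n + 1) * (2 * n + 1) : ℕ) : ℝ) ≤ ((8 * 2 ^ n : ℕ) : ℝ) := by
            exact_mod_cast sq_bound n
        _ ≤ 8 * 2 ^ (n + 1) := by push_cast; rw [pow_succ]; nlinarith [pow_pos (by norm_num : (0:ℝ) < 2) n]
    nlinarith
end Analysis

lemma main_tendsto {A : Type*} [Fintype A] {U : Set ((ℤ × ℤ) → A)}
    (hne : U.Nonempty) (hshift : ∀ w : ℤ × ℤ, ∀ x ∈ U, (fun p => x (p + w)) ∈ U)
    {v : ℤ × ℤ} (hv : v ≠ 0) :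
    Tendsto (fun n => (1 / ((OmegaSys v n).card : ℝ)) *
        Real.log (patternCount U (OmegaSys v n))) atTop
      (𝓝 (⨅ m : ℕ, (1 / (m + 1 : ℝ)) * Real.log (patternCount U (lineSegment v (m + 1))))) := by
  classical
  have hAne : Nonempty A := ⟨hne.some (0, 0)⟩
  set K : ℕ := Fintype.card A with hK
  have hKpos : 0 < K := Fintype.card_pos
  set c : ℕ → ℝ := fun k => Real.log (patternCount U (lineSegment v k)) with hc
  have hpc_pos : ∀ L : Finset (ℤ × ℤ), (0 : ℝ) < (patternCount U L : ℝ) := by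
    intro L
    exact_mod_cast patternCount_pos hne L
  have hc_nonneg : ∀ k, 0 ≤ c k := by
    intro k
    apply Real.log_nonneg
    exact_mod_cast patternCount_pos hne _
  set t : ℕ → ℝ := fun m => (1 / (m + 1 : ℝ)) * c (m + 1) with ht
  have ht_nonneg : ∀ m, 0 ≤ t m := fun m => mul_nonneg (by positivity) (hc_nonneg _)
  have hbdd : BddBelow (Set.range t) := ⟨0, by rintro _ ⟨m, rfl⟩; exact ht_nonneg m⟩
  set h : ℝ := ⨅ m : ℕ, t m with hh
  have h_le_t : ∀ m, h ≤ t m := fun m => ciInf_le hbdd m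
  have h_nonneg : 0 ≤ h := le_ciInf ht_nonneg
  set F : ℕ → ℕ := fun n => (n + 1).factorial with hF
  have hFpos : ∀ n, 0 < F n := fun n => Nat.factorial_pos _
  have hFcast : ∀ n, (0 : ℝ) < (F n : ℝ) := fun n => by exact_mod_cast hFpos n
  set g : ℕ → ℝ := fun n => (1 / (F n : ℝ)) * c (F n) with hg
  have hg_ge : ∀ n, h ≤ g n := by
    intro n
    have h1 := h_le_t (F n - 1)
    have h2 : F n - 1 + 1 = F n := Nat.succ_pred_eq_of_pos (hFpos n)
    have h3 : ((F n - 1 : ℕ) : ℝ) + 1 = (F n : ℝ) := by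
      exact_mod_cast congrArg (Nat.cast : ℕ → ℝ) h2
    have h4 : t (F n - 1) = g n := by
      simp only [ht, hg, h2, h3]
    rwa [h4] at h1
  have hg_le : ∀ m n : ℕ, m ≤ n → g n ≤ t m := by
    intro m n hmn
    have hd : (m + 1) ∣ F n := Nat.dvd_factorial (by omega) (by omega)
    set k : ℕ := F n / (m + 1) with hkdef
    have hkm : F n = k * (m + 1) := (Nat.div_mul_cancel hd).symm
    have hk1 : 1 ≤ k := by
      rw [hkdef, Nat.one_le_div_iff (by omega)]
      calc m + 1 ≤ n + 1 := by omega
        _ ≤ F n := Nat.self_le_factorial _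
    have hpc := patternCount_lineSegment_pow hshift v (m + 1) k hk1
    rw [← hkm] at hpc
    have hlog : c (F n) ≤ (k : ℝ) * c (m + 1) := by
      have h1 : Real.log ((patternCount U (lineSegment v (F n)) : ℝ)) ≤
          Real.log (((patternCount U (lineSegment v (m + 1)) : ℝ)) ^ k) := by
        apply Real.log_le_log (hpc_pos _)
        exact_mod_cast hpc
      rwa [Real.log_pow] at h1
    have hkpos' : (0 : ℝ) < (k : ℝ) := by exact_mod_cast hk1
    calc g n = c (F n) / (F n : ℝ) := by simp only [hg]; ring
      _ ≤ ((k : ℝ) * c (m + 1)) / (F n : ℝ) := by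
          rw [div_le_div_iff₀ (hFcast n) (hFcast n)]
          nlinarith [hFcast n]
      _ = c (m + 1) / ((m : ℝ) + 1) := by
          rw [hkm]
          push_cast
          rw [mul_div_mul_left _ _ (ne_of_gt hkpos')]
      _ = t m := by simp only [ht]; ring
  have hg_tendsto : Tendsto g atTop (𝓝 h) := by
    rw [Metric.tendsto_atTop]
    intro ε hε
    have hlt : ⨅ m : ℕ, t m < h + ε := by rw [← hh]; linarith
    obtain ⟨m, hm⟩ := exists_lt_of_ciInf_lt hlt
    refine ⟨m, fun n hn => ?_⟩
    rw [Real.dist_eq, abs_of_nonneg (by linarith [hg_ge n])]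
    have h2 := hg_le m n hn
    linarith
  set Br : ℕ → ℝ := fun n => (((2 * n + 1) * (2 * n + 1) : ℕ) : ℝ) with hBr
  have hBr_nonneg : ∀ n, 0 ≤ Br n := fun n => by simp only [hBr]; positivity
  have hr0 : Tendsto (fun n => Br n / (F n : ℝ)) atTop (𝓝 0) := by
    simp only [hBr, hF]
    exact ratio_tendsto_zero
  have hquot : Tendsto (fun n => (F n : ℝ) / ((F n : ℝ) + Br n)) atTop (𝓝 1) := by
    have heq : ∀ n, (F n : ℝ) / ((F n : ℝ) + Br n) = 1 / (1 + Br n / (F n : ℝ)) := by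
      intro n
      have h1 := hFcast n
      have h2 := hBr_nonneg n
      have h3 : (F n : ℝ) ≠ 0 := ne_of_gt h1
      have h4 : (F n : ℝ) + Br n ≠ 0 := by linarith
      field_simp
    have h1 : Tendsto (fun n => 1 / (1 + Br n / (F n : ℝ))) atTop (𝓝 (1 / (1 + 0))) := by
      apply Tendsto.div tendsto_const_nhds
      · exact tendsto_const_nhds.add hr0
      · norm_num
    rw [show (1 : ℝ) / (1 + 0) = 1 by norm_num] at h1
    exact h1.congr (fun n => (heq n).symm)
  have hl : Tendsto (fun n => ((F n : ℝ) / ((F n : ℝ) + Br n)) * g n) atTop (𝓝 (1 * h)) :=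
    hquot.mul hg_tendsto
  rw [one_mul] at hl
  have hu : Tendsto (fun n => g n + (Br n / (F n : ℝ)) * Real.log K) atTop
      (𝓝 (h + 0 * Real.log K)) := hg_tendsto.add (hr0.mul_const _)
  rw [zero_mul, add_zero] at hu
  have hW_lb : ∀ n, (F n : ℝ) ≤ ((OmegaSys v n).card : ℝ) := by
    intro n
    have hn : F n ≤ (OmegaSys v n).card := by
      calc F n = (lineSegment v (F n)).card := (card_lineSegment hv _).symm
        _ ≤ _ := Finset.card_le_card Finset.subset_union_left
    exact_mod_cast hn
  have hW_ub : ∀ n, ((OmegaSys v n).card : ℝ) ≤ (F n : ℝ) + Br n := by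
    intro n
    have hn : (OmegaSys v n).card ≤ F n + (2 * n + 1) * (2 * n + 1) := by
      calc (OmegaSys v n).card ≤ (lineSegment v (F n)).card + (sqN n).card :=
            Finset.card_union_le _ _
        _ = F n + (2 * n + 1) * (2 * n + 1) := by
            rw [card_lineSegment hv, sqN, card_Zrect]
    simp only [hBr]
    exact_mod_cast hn
  have hWpos : ∀ n, (0 : ℝ) < ((OmegaSys v n).card : ℝ) :=
    fun n => lt_of_lt_of_le (hFcast n) (hW_lb n)
  have hlogP_lb : ∀ n, c (F n) ≤ Real.log ((patternCount U (OmegaSys v n) : ℝ)) := by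
    intro n
    apply Real.log_le_log (hpc_pos _)
    exact_mod_cast patternCount_mono Finset.subset_union_left
  have hlogP_nonneg : ∀ n, 0 ≤ Real.log ((patternCount U (OmegaSys v n) : ℝ)) := by
    intro n
    apply Real.log_nonneg
    exact_mod_cast patternCount_pos hne _
  have hlogP_ub : ∀ n, Real.log ((patternCount U (OmegaSys v n) : ℝ)) ≤
      c (F n) + Br n * Real.log K := by
    intro n
    have hub : patternCount U (OmegaSys v n) ≤
        patternCount U (lineSegment v (F n)) * K ^ ((2 * n + 1) * (2 * n + 1)) := by
      calc patternCount U (OmegaSys v n)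
          ≤ patternCount U (lineSegment v (F n)) * patternCount U (sqN n) :=
            patternCount_union_le _ _
        _ ≤ _ := by
            apply Nat.mul_le_mul_left
            have h1 := patternCount_le_pow (U := U) (sqN n)
            rwa [sqN, card_Zrect] at h1
    have hKR : (0 : ℝ) < (K : ℝ) := by exact_mod_cast hKpos
    have h1 : Real.log ((patternCount U (OmegaSys v n) : ℝ)) ≤
        Real.log ((patternCount U (lineSegment v (F n)) : ℝ) *
          (K : ℝ) ^ ((2 * n + 1) * (2 * n + 1))) := by
      apply Real.log_le_log (hpc_pos _)
      exact_mod_cast hub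
    rw [Real.log_mul (ne_of_gt (hpc_pos _)) (by positivity), Real.log_pow] at h1
    simp only [hBr]
    push_cast
    push_cast at h1
    exact h1
  have hmain : Tendsto (fun n => (1 / ((OmegaSys v n).card : ℝ)) *
      Real.log (patternCount U (OmegaSys v n))) atTop (𝓝 h) := by
    apply tendsto_of_tendsto_of_tendsto_of_le_of_le hl hu
    · intro n
      have h1 := hFcast n
      have h2 := hBr_nonneg n
      have h3 : (F n : ℝ) ≠ 0 := ne_of_gt h1
      have h4 : (F n : ℝ) + Br n ≠ 0 := by linarith
      have e1 : ((F n : ℝ) / ((F n : ℝ) + Br n)) * g n = c (F n) / ((F n : ℝ) + Br n) := by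
        simp only [hg]
        field_simp
      show ((F n : ℝ) / ((F n : ℝ) + Br n)) * g n ≤
        (1 / ((OmegaSys v n).card : ℝ)) * Real.log (patternCount U (OmegaSys v n))
      rw [e1, one_div_mul_eq_div]
      calc c (F n) / ((F n : ℝ) + Br n) ≤ c (F n) / ((OmegaSys v n).card : ℝ) :=
            div_le_div_of_nonneg_left (hc_nonneg _) (hWpos n) (hW_ub n)
        _ ≤ Real.log ((patternCount U (OmegaSys v n) : ℝ)) / ((OmegaSys v n).card : ℝ) :=
            (div_le_div_iff_of_pos_right (hWpos n)).mpr (hlogP_lb n)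
    · intro n
      have h1 := hFcast n
      have h3 : (F n : ℝ) ≠ 0 := ne_of_gt h1
      show (1 / ((OmegaSys v n).card : ℝ)) * Real.log (patternCount U (OmegaSys v n)) ≤
        g n + (Br n / (F n : ℝ)) * Real.log K
      rw [one_div_mul_eq_div]
      calc Real.log ((patternCount U (OmegaSys v n) : ℝ)) / ((OmegaSys v n).card : ℝ)
          ≤ Real.log ((patternCount U (OmegaSys v n) : ℝ)) / (F n : ℝ) :=
            div_le_div_of_nonneg_left (hlogP_nonneg n) (hFcast n) (hW_lb n)
        _ ≤ (c (F n) + Br n * Real.log K) / (F n : ℝ) :=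
            (div_le_div_iff_of_pos_right (hFcast n)).mpr (hlogP_ub n)
        _ = g n + (Br n / (F n : ℝ)) * Real.log K := by
            simp only [hg]
            field_simp
  simp only [hh, ht, hc] at hmain
  exact hmain

/-- Theorem 1.4 / 4.2, second part: if `ĥ⁽¹⁾(U)` is attained by some
one-dimensional sublattice, then it is realized as `h_Ω(U)` for some expanding system. -/
theorem exists_expanding_system_entropyAlong_eq_hHatOne {A : Type*} [Fintype A]
    [TopologicalSpace A] [DiscreteTopology A] (hcard : 2 ≤ Fintype.card A)
    (U : Set ((ℤ × ℤ) → A)) (hU : IsShiftSpace U) (hbg : IsBlockGluing U)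
    (hlt : rectEntropy U < hHatOne U)
    (v : ℤ × ℤ) (hv : v ≠ 0) (hattain : projEntropy U v = hHatOne U) :
    ∃ Ω : ℕ → Finset (ℤ × ℤ), IsExpandingSystem Ω ∧
      entropyAlong U Ω = hHatOne U ∧ hHatOne U = projEntropy U v := by
  obtain ⟨hne, -, hshift⟩ := hU
  refine ⟨OmegaSys v, OmegaSys_expanding hv, ?_, hattain.symm⟩
  rw [← hattain]
  have hmain := main_tendsto hne hshift hv
  exact Filter.Tendsto.limsup_eq hmain
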